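/- For a mixed stopping strategy p̂, the equilibrium condition (EqI): J_p̂(x) ≥ q f(x) + (1−q) E_x[E_{X_1}[f(X_{τ_p̂})]] + g(q h(x) + (1−q) E_x[E_{X_1}[h(X_{τ_p̂})]]) for all q ∈ [0,1] and all x ∈ E, is equivalent to each of the following three conditions: (EqII) φ_p̂(x) + g(ψ_p̂(x)) ≥ K(x,q,p̂) for all q ∈ [0,1] and all x ∈ E; (EqIII) φ_p̂(x) + g(ψ_p̂(x)) = max_{q∈[0,1]} K(x,q,p̂) for all x ∈ E; (EqIV) p̂_x ∈ argmax_{q∈[0,1]} K(x,q,p̂) for all x ∈ E. -/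

import Mathlib

/-!
Analytic model of the time-inconsistent stopping framework of Christensen & Lindensjö,
"Time-inconsistent stopping, myopic adjustment & equilibrium stability".

A time-homogeneous Markov chain `X` on a finite state space `E` is encoded by its
transition matrix `P` (`P x y = P_x(X_1 = y)`).  A mixed stopping strategy is a vector
`p ∈ [0,1]^E`; the associated stopping time is `τ_p = min {n ≥ 0 : Y_n ≤ p_{X_n}}`,
where the `Y_n` are i.i.d. uniform randomization devices.  The quantity
`phi P p f x = E_x[f(X_{τ_p})]` (with the convention `f(X_{τ_p}) := lim_n f(X_n)` on
`{τ_p = ∞}`, the limit existing a.s. by absorption) is realized analytically, via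
dominated convergence, as the limit in `n` of the finite-horizon values
`phiSeq P p f n x = E_x[f(X_{τ_p ∧ n})]`, which satisfy the one-step recursion given
by the Markov property.  Likewise `step P v x = E_x[v(X_1)]`.
-/

open Filter

variable {E : Type*}

/-- One-step expectation operator: `step P v x = E_x[v(X_1)] = ∑ y, P x y * v y`. -/
noncomputable def step [Fintype E] (P : E → E → ℝ) (v : E → ℝ) (x : E) : ℝ :=
  ∑ y, P x y * v y

/-- Finite-horizon value `phiSeq P p f n x = E_x[f(X_{τ_p ∧ n})]`. -/
noncomputable def phiSeq [Fintype E] (P : E → E → ℝ) (p f : E → ℝ) : ℕ → E → ℝ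
  | 0 => f
  | n + 1 => fun x => p x * f x + (1 - p x) * step P (phiSeq P p f n) x

/-- `phi P p f x = E_x[f(X_{τ_p})]`, with the convention `f(X_{τ_p}) := lim_n f(X_n)`
on `{τ_p = ∞}`; by dominated convergence it is the limit of the finite-horizon values. -/
noncomputable def phi [Fintype E] (P : E → E → ℝ) (p f : E → ℝ) (x : E) : ℝ :=
  limUnder atTop fun n => phiSeq P p f n x

/-- `P` is a transition matrix (row-stochastic). -/
def IsTransition [Fintype E] (P : E → E → ℝ) : Prop :=
  (∀ x y, 0 ≤ P x y) ∧ ∀ x, ∑ y, P x y = 1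

/-- `a` is an absorbing state of the chain. -/
def IsAbsorbingState (P : E → E → ℝ) (a : E) : Prop := P a a = 1

/-- The chain is absorbing: from each starting state, some absorbing state is reached
with positive probability in a finite number of steps. -/
def IsAbsorbingChain [Fintype E] [DecidableEq E] (P : E → E → ℝ) : Prop :=
  ∀ x : E, ∃ (a : E) (n : ℕ), IsAbsorbingState P a ∧ 0 < ((Matrix.of P) ^ n) x a

/-- A mixed stopping strategy: a vector in `[0,1]^E`. -/
def IsStrategy (p : E → ℝ) : Prop := ∀ x, p x ∈ Set.Icc (0 : ℝ) 1

/-- `Kval P f h g p x q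
      = q f(x) + (1-q) E_x[φ_p(X_1)] + g (q h(x) + (1-q) E_x[ψ_p(X_1)])`. -/
noncomputable def Kval [Fintype E] (P : E → E → ℝ) (f h : E → ℝ) (g : ℝ → ℝ)
    (p : E → ℝ) (x : E) (q : ℝ) : ℝ :=
  q * f x + (1 - q) * step P (phi P p f) x
    + g (q * h x + (1 - q) * step P (phi P p h) x)

/-- `Jval P f h g p x = φ_p(x) + g(ψ_p(x)) = E_x[f(X_{τ_p})] + g(E_x[h(X_{τ_p})])`. -/
noncomputable def Jval [Fintype E] (P : E → E → ℝ) (f h : E → ℝ) (g : ℝ → ℝ)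
    (p : E → ℝ) (x : E) : ℝ :=
  phi P p f x + g (phi P p h x)

/-- Subgame perfect Nash equilibrium (condition (EqI)). -/
def IsEquilibrium [Fintype E] (P : E → E → ℝ) (f h : E → ℝ) (g : ℝ → ℝ)
    (p : E → ℝ) : Prop :=
  ∀ x : E, ∀ q ∈ Set.Icc (0 : ℝ) 1, Kval P f h g p x q ≤ Jval P f h g p x

open Classical in
noncomputable def Tb [Fintype E] (P : E → E → ℝ) (x y : E) : ℝ :=
  if P y y = 1 then 0 else P x y

noncomputable def sig [Fintype E] (P : E → E → ℝ) : ℕ → E → ℝ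
  | 0 => fun _ => 1
  | n + 1 => fun x => ∑ y, Tb P x y * sig P n y

section aux
variable [Fintype E] [DecidableEq E] {P : E → E → ℝ}

lemma Tb_nonneg (hP : IsTransition P) (x y : E) : 0 ≤ Tb P x y := by
  unfold Tb; split <;> [rfl; exact hP.1 x y]

lemma Tb_le (hP : IsTransition P) (x y : E) : Tb P x y ≤ P x y := by
  unfold Tb; split <;> [exact hP.1 x y; rfl]

lemma absorb_row (hP : IsTransition P) {a : E} (ha : P a a = 1) {y : E} (hy : y ≠ a) :
    P a y = 0 := by
  have h0 : ∑ z ∈ Finset.univ.erase a, P a z = 0 := by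
    have h2 := Finset.add_sum_erase Finset.univ (P a) (Finset.mem_univ a)
    have h1 := hP.2 a
    linarith
  exact (Finset.sum_eq_zero_iff_of_nonneg (fun z _ => hP.1 a z)).1 h0 y
    (Finset.mem_erase.2 ⟨hy, Finset.mem_univ y⟩)

lemma sig_nonneg (hP : IsTransition P) : ∀ n (x : E), 0 ≤ sig P n x
  | 0, x => zero_le_one
  | n + 1, x => Finset.sum_nonneg fun y _ =>
      mul_nonneg (Tb_nonneg hP x y) (sig_nonneg hP n y)

lemma sig_le_one (hP : IsTransition P) : ∀ n (x : E), sig P n x ≤ 1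
  | 0, x => le_refl 1
  | n + 1, x => by
      calc (∑ y, Tb P x y * sig P n y) ≤ ∑ y, P x y * 1 :=
            Finset.sum_le_sum fun y _ => mul_le_mul (Tb_le hP x y)
              (sig_le_one hP n y) (sig_nonneg hP n y) (hP.1 x y)
        _ = 1 := by simp [hP.2 x]

lemma sig_mono (hP : IsTransition P) : ∀ n (x : E), sig P (n + 1) x ≤ sig P n x
  | 0, x => by
      calc (∑ y, Tb P x y * sig P 0 y) ≤ ∑ y, P x y * 1 :=
            Finset.sum_le_sum fun y _ => mul_le_mul (Tb_le hP x y)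
              (sig_le_one hP 0 y) (sig_nonneg hP 0 y) (hP.1 x y)
        _ = 1 := by simp [hP.2 x]
  | n + 1, x =>
      Finset.sum_le_sum fun y _ =>
        mul_le_mul_of_nonneg_left (sig_mono hP n y) (Tb_nonneg hP x y)

lemma sig_add_le (hP : IsTransition P) : ∀ (m n : ℕ) (x : E), sig P (n + m) x ≤ sig P n x
  | 0, n, x => le_refl _
  | m + 1, n, x => by
      have h : n + (m + 1) = (n + m) + 1 := by omega
      rw [h]
      exact (sig_mono hP (n + m) x).trans (sig_add_le hP m n x)

lemma sig_add_mul (hP : IsTransition P) {M : ℝ} {N : ℕ} (hMN : ∀ y : E, sig P N y ≤ M) :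
    ∀ (n : ℕ) (x : E), sig P (n + N) x ≤ sig P n x * M
  | 0, x => by simpa [sig] using hMN x
  | n + 1, x => by
      have h : n + 1 + N = (n + N) + 1 := by omega
      rw [h]
      calc (∑ y, Tb P x y * sig P (n + N) y)
          ≤ ∑ y, Tb P x y * (sig P n y * M) :=
            Finset.sum_le_sum fun y _ =>
              mul_le_mul_of_nonneg_left (sig_add_mul hP hMN n y) (Tb_nonneg hP x y)
        _ = (∑ y, Tb P x y * sig P n y) * M := by rw [Finset.sum_mul]; exact Finset.sum_congr rfl fun y _ => by ring
        _ = sig P (n + 1) x * M := rfl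

lemma sig_pow_le (hP : IsTransition P) {M : ℝ} {N : ℕ} (hM0 : 0 ≤ M)
    (hMN : ∀ y : E, sig P N y ≤ M) : ∀ (j : ℕ) (x : E), sig P (N * j) x ≤ M ^ j
  | 0, x => by simp [sig]
  | j + 1, x => by
      have h : N * (j + 1) = N * j + N := by ring
      rw [h, pow_succ]
      exact (sig_add_mul hP hMN (N * j) x).trans
        (mul_le_mul_of_nonneg_right (sig_pow_le hP hM0 hMN j x) hM0)

lemma sig_le_pow (hP : IsTransition P) {M : ℝ} {N : ℕ} (hM0 : 0 ≤ M)
    (hMN : ∀ y : E, sig P N y ≤ M) (n : ℕ) (x : E) : sig P n x ≤ M ^ (n / N) := by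
  have h : n = N * (n / N) + n % N := (Nat.div_add_mod n N).symm
  calc sig P n x = sig P (N * (n / N) + n % N) x := by rw [← h]
    _ ≤ sig P (N * (n / N)) x := sig_add_le hP _ _ x
    _ ≤ M ^ (n / N) := sig_pow_le hP hM0 hMN _ x

-- matrix power facts
lemma matpow_nonneg (hP : IsTransition P) : ∀ n (x y : E), 0 ≤ ((Matrix.of P) ^ n) x y
  | 0, x, y => by
      rw [pow_zero]
      by_cases h : x = y <;> simp [Matrix.one_apply, h]
  | n + 1, x, y => by
      rw [pow_succ, Matrix.mul_apply]
      exact Finset.sum_nonneg fun z _ => mul_nonneg (matpow_nonneg hP n x z) (hP.1 z y)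

lemma matpow_rowsum (hP : IsTransition P) : ∀ n (x : E), ∑ y, ((Matrix.of P) ^ n) x y = 1
  | 0, x => by simp [Matrix.one_apply]
  | n + 1, x => by
      simp only [pow_succ, Matrix.mul_apply]
      rw [Finset.sum_comm]
      calc (∑ y, ∑ z, ((Matrix.of P) ^ n) x y * P y z)
          = ∑ y : E, ((Matrix.of P) ^ n) x y * ∑ z, P y z := by
            simp [Finset.mul_sum]
        _ = 1 := by
            simp only [hP.2, mul_one]
            exact matpow_rowsum hP n x

lemma matpow_le_one (hP : IsTransition P) (n : ℕ) (x y : E) :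
    ((Matrix.of P) ^ n) x y ≤ 1 := by
  calc ((Matrix.of P) ^ n) x y ≤ ∑ z, ((Matrix.of P) ^ n) x z :=
        Finset.single_le_sum (fun z _ => matpow_nonneg hP n x z) (Finset.mem_univ y)
    _ = 1 := matpow_rowsum hP n x

lemma matpow_absorb (hP : IsTransition P) {a : E} (ha : P a a = 1) :
    ∀ n (z : E), ((Matrix.of P) ^ n) a z = if a = z then 1 else 0
  | 0, z => by simp [Matrix.one_apply]
  | n + 1, z => by
      rw [pow_succ', Matrix.mul_apply]
      rw [Finset.sum_eq_single a]
      · rw [matpow_absorb hP ha n z]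
        simp [Matrix.of_apply, ha]
      · intro w _ hw
        have : P a w = 0 := absorb_row hP ha (by exact fun h => hw h)
        simp [Matrix.of_apply, this]
      · intro h; exact absurd (Finset.mem_univ a) h

lemma matpow_succ_ge (hP : IsTransition P) {a : E} (ha : P a a = 1) (n : ℕ) (x : E) :
    ((Matrix.of P) ^ n) x a ≤ ((Matrix.of P) ^ (n + 1)) x a := by
  rw [pow_succ, Matrix.mul_apply]
  calc ((Matrix.of P) ^ n) x a = ((Matrix.of P) ^ n) x a * P a a := by rw [ha, mul_one]
    _ ≤ ∑ z, ((Matrix.of P) ^ n) x z * (Matrix.of P) z a :=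
        Finset.single_le_sum (f := fun z => ((Matrix.of P) ^ n) x z * (Matrix.of P) z a)
          (fun z _ => mul_nonneg (matpow_nonneg hP n x z) (hP.1 z a)) (Finset.mem_univ a)

lemma sig_le_one_sub (hP : IsTransition P) {a : E} (ha : P a a = 1) :
    ∀ n (x : E), sig P (n + 1) x ≤ 1 - ((Matrix.of P) ^ (n + 1)) x a
  | 0, x => by
      have h1 : ∀ y : E, Tb P x y * sig P 0 y ≤ P x y - (if y = a then P x a else 0) := by
        intro y
        by_cases hy : y = a
        · subst hy
          simp [Tb, ha, sig]
        · simp only [if_neg hy, sub_zero, sig, mul_one]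
          exact Tb_le hP x y
      calc sig P 1 x ≤ ∑ y, (P x y - (if y = a then P x a else 0)) :=
            Finset.sum_le_sum fun y _ => h1 y
        _ = 1 - P x a := by
            rw [Finset.sum_sub_distrib, hP.2 x, Finset.sum_ite_eq' Finset.univ a (fun _ => P x a)]
            simp
        _ = 1 - ((Matrix.of P) ^ 1) x a := by rw [pow_one]; rfl
  | n + 1, x => by
      have IH := sig_le_one_sub hP ha n
      have key : ((Matrix.of P) ^ (n + 2)) x a
          ≤ ∑ y, (Tb P x y * ((Matrix.of P) ^ (n + 1)) y a + (P x y - Tb P x y)) := by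
        rw [pow_succ', Matrix.mul_apply]
        refine Finset.sum_le_sum fun y _ => ?_
        by_cases hy : P y y = 1
        · have hTb : Tb P x y = 0 := by simp [Tb, hy]
          have := matpow_le_one hP (n + 1) y a
          have h0 := matpow_nonneg hP (n + 1) y a
          have := hP.1 x y
          rw [hTb]
          simp only [Matrix.of_apply, zero_mul, zero_add, sub_zero]
          nlinarith
        · have hTb : Tb P x y = P x y := by simp [Tb, hy]
          rw [hTb]
          simp [Matrix.of_apply]
      have step1 : sig P (n + 2) x ≤ ∑ y, Tb P x y * (1 - ((Matrix.of P) ^ (n + 1)) y a) :=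
        Finset.sum_le_sum fun y _ =>
          mul_le_mul_of_nonneg_left (IH y) (Tb_nonneg hP x y)
      have expand : ∑ y, Tb P x y * (1 - ((Matrix.of P) ^ (n + 1)) y a)
          = ∑ y, Tb P x y - ∑ y, Tb P x y * ((Matrix.of P) ^ (n + 1)) y a := by
        rw [← Finset.sum_sub_distrib]
        exact Finset.sum_congr rfl fun y _ => by ring
      have expand2 : ∑ y, (Tb P x y * ((Matrix.of P) ^ (n + 1)) y a + (P x y - Tb P x y))
          = ∑ y, Tb P x y * ((Matrix.of P) ^ (n + 1)) y a + (1 - ∑ y, Tb P x y) := by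
        rw [Finset.sum_add_distrib, Finset.sum_sub_distrib, hP.2 x]
      rw [expand] at step1
      rw [expand2] at key
      linarith

lemma exists_sig_lt (hP : IsTransition P)
    (habs : ∀ x : E, ∃ (a : E) (n : ℕ), P a a = 1 ∧ 0 < ((Matrix.of P) ^ n) x a) (x : E) :
    ∃ m, 0 < m ∧ sig P m x < 1 := by
  obtain ⟨a, n, ha, hpos⟩ := habs x
  have hmono : 0 < ((Matrix.of P) ^ (n + 1)) x a :=
    lt_of_lt_of_le hpos (matpow_succ_ge hP ha n x)
  exact ⟨n + 1, Nat.succ_pos n, by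
    have := sig_le_one_sub hP ha n x
    linarith⟩

lemma sum_pow_div_le {M : ℝ} (hM0 : 0 ≤ M) (hM1 : M < 1) {N : ℕ} (hN : 0 < N) (n : ℕ) :
    ∑ i ∈ Finset.range n, M ^ (i / N) ≤ (N : ℝ) * (1 - M)⁻¹ := by
  rw [Finset.sum_comp (fun b => M ^ b) (fun i => i / N)]
  have hcard : ∀ b : ℕ, (((Finset.range n).filter (fun i => i / N = b)).card : ℝ) ≤ (N : ℝ) := by
    intro b
    have hsub : (Finset.range n).filter (fun i => i / N = b) ⊆ Finset.Ico (N * b) (N * b + N) := by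
      intro i hi
      obtain ⟨-, hib⟩ := Finset.mem_filter.1 hi
      refine Finset.mem_Ico.2 ⟨?_, ?_⟩
      · rw [← hib]; exact Nat.mul_div_le i N
      · have h1 := Nat.div_add_mod i N
        have h2 := Nat.mod_lt i hN
        rw [hib] at h1
        omega
    have h4 := Finset.card_le_card hsub
    rw [Nat.card_Ico] at h4
    have h3 : ((Finset.range n).filter (fun i => i / N = b)).card ≤ N := by omega
    exact_mod_cast h3
  calc (∑ b ∈ (Finset.range n).image (fun i => i / N),
          ((Finset.range n).filter (fun i => i / N = b)).card • M ^ b)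
      ≤ ∑ b ∈ (Finset.range n).image (fun i => i / N), (N : ℝ) * M ^ b := by
        refine Finset.sum_le_sum fun b _ => ?_
        rw [nsmul_eq_mul]
        exact mul_le_mul_of_nonneg_right (hcard b) (pow_nonneg hM0 b)
    _ ≤ ∑ b ∈ Finset.range n, (N : ℝ) * M ^ b := by
        refine Finset.sum_le_sum_of_subset_of_nonneg ?_ fun b _ _ =>
          mul_nonneg (Nat.cast_nonneg N) (pow_nonneg hM0 b)
        intro b hb
        obtain ⟨i, hi, rfl⟩ := Finset.mem_image.1 hb
        exact Finset.mem_range.2 (lt_of_le_of_lt (Nat.div_le_self i N) (Finset.mem_range.1 hi))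
    _ = (N : ℝ) * ∑ b ∈ Finset.range n, M ^ b := by rw [Finset.mul_sum]
    _ ≤ (N : ℝ) * (1 - M)⁻¹ := by
        refine mul_le_mul_of_nonneg_left ?_ (Nat.cast_nonneg N)
        rw [← tsum_geometric_of_lt_one hM0 hM1]
        exact Summable.sum_le_tsum _ (fun i _ => pow_nonneg hM0 i) (summable_geometric_of_lt_one hM0 hM1)

end aux

section phiseq
variable [Fintype E] [DecidableEq E] {P : E → E → ℝ}

lemma step_absorb (hP : IsTransition P) {a : E} (ha : P a a = 1) (v : E → ℝ) :
    step P v a = v a := by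
  unfold step
  rw [Finset.sum_eq_single a]
  · rw [ha, one_mul]
  · intro w _ hw; rw [absorb_row hP ha hw, zero_mul]
  · intro h; exact absurd (Finset.mem_univ a) h

lemma phiSeq_absorb (hP : IsTransition P) {a : E} (ha : P a a = 1) (p f : E → ℝ) :
    ∀ n, phiSeq P p f n a = f a
  | 0 => rfl
  | n + 1 => by
      show p a * f a + (1 - p a) * step P (phiSeq P p f n) a = f a
      rw [step_absorb hP ha, phiSeq_absorb hP ha p f n]; ring

lemma w_bound (hP : IsTransition P) {p : E → ℝ} (hp : IsStrategy p) (f : E → ℝ)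
    (n : ℕ) (x : E) :
    |phiSeq P p f (n + 2) x - phiSeq P p f (n + 1) x|
      ≤ ∑ y, Tb P x y * |phiSeq P p f (n + 1) y - phiSeq P p f n y| := by
  have hsub : ∀ (v u : E → ℝ), step P v x - step P u x = ∑ y, P x y * (v y - u y) := by
    intro v u
    unfold step
    rw [← Finset.sum_sub_distrib]
    exact Finset.sum_congr rfl fun y _ => by ring
  have e : phiSeq P p f (n + 2) x - phiSeq P p f (n + 1) x
      = (1 - p x) * ∑ y, P x y * (phiSeq P p f (n + 1) y - phiSeq P p f n y) := by
    show (p x * f x + (1 - p x) * step P (phiSeq P p f (n + 1)) x)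
        - (p x * f x + (1 - p x) * step P (phiSeq P p f n) x) = _
    rw [← hsub]; ring
  have hpx := hp x
  rw [e, abs_mul, abs_of_nonneg (by linarith [hpx.2] : (0:ℝ) ≤ 1 - p x)]
  calc (1 - p x) * |∑ y, P x y * (phiSeq P p f (n + 1) y - phiSeq P p f n y)|
      ≤ 1 * |∑ y, P x y * (phiSeq P p f (n + 1) y - phiSeq P p f n y)| := by
        exact mul_le_mul_of_nonneg_right (by linarith [hpx.1]) (abs_nonneg _)
    _ = |∑ y, P x y * (phiSeq P p f (n + 1) y - phiSeq P p f n y)| := one_mul _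
    _ ≤ ∑ y, |P x y * (phiSeq P p f (n + 1) y - phiSeq P p f n y)| :=
        Finset.abs_sum_le_sum_abs _ _
    _ = ∑ y, Tb P x y * |phiSeq P p f (n + 1) y - phiSeq P p f n y| := by
        refine Finset.sum_congr rfl fun y _ => ?_
        rw [abs_mul, abs_of_nonneg (hP.1 x y)]
        by_cases hy : P y y = 1
        · rw [phiSeq_absorb hP hy p f (n + 1), phiSeq_absorb hP hy p f n]
          simp
        · rw [show Tb P x y = P x y from by simp [Tb, hy]]

lemma w_le (hP : IsTransition P) {p : E → ℝ} (hp : IsStrategy p) {f : E → ℝ} {W : ℝ}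
    (hW : ∀ y : E, |phiSeq P p f 1 y - phiSeq P p f 0 y| ≤ W) :
    ∀ (n : ℕ) (x : E), |phiSeq P p f (n + 1) x - phiSeq P p f n x| ≤ W * sig P n x
  | 0, x => by simpa [sig] using hW x
  | n + 1, x => by
      refine (w_bound hP hp f n x).trans ?_
      calc (∑ y, Tb P x y * |phiSeq P p f (n + 1) y - phiSeq P p f n y|)
          ≤ ∑ y, Tb P x y * (W * sig P n y) :=
            Finset.sum_le_sum fun y _ =>
              mul_le_mul_of_nonneg_left (w_le hP hp hW n y) (Tb_nonneg hP x y)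
        _ = W * ∑ y, Tb P x y * sig P n y := by
            rw [Finset.mul_sum]; exact Finset.sum_congr rfl fun y _ => by ring
        _ = W * sig P (n + 1) x := rfl

lemma tendsto_phiSeq (hP : IsTransition P) (habs : IsAbsorbingChain P)
    {p : E → ℝ} (hp : IsStrategy p) (f : E → ℝ) (x : E) :
    Tendsto (fun n => phiSeq P p f n x) atTop (nhds (phi P p f x)) := by
  have hne : Nonempty E := ⟨x⟩
  -- uniform horizon with sig < 1
  have key : ∀ y : E, ∃ m, 0 < m ∧ sig P m y < 1 := fun y => exists_sig_lt hP habs y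
  choose mf hm0 hm1 using key
  set N : ℕ := Finset.univ.sup mf with hN
  have hNpos : 0 < N := lt_of_lt_of_le (hm0 x) (Finset.le_sup (Finset.mem_univ x))
  have hNlt : ∀ y : E, sig P N y < 1 := by
    intro y
    have hle : mf y ≤ N := Finset.le_sup (Finset.mem_univ y)
    have : sig P (mf y + (N - mf y)) y ≤ sig P (mf y) y := sig_add_le hP _ _ y
    rw [show mf y + (N - mf y) = N from by omega] at this
    exact lt_of_le_of_lt this (hm1 y)
  set M : ℝ := Finset.univ.sup' Finset.univ_nonempty (sig P N) with hM
  have hMb : ∀ y : E, sig P N y ≤ M := fun y => Finset.le_sup' _ (Finset.mem_univ y)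
  have hM0 : 0 ≤ M := le_trans (sig_nonneg hP N x) (hMb x)
  have hM1 : M < 1 := (Finset.sup'_lt_iff _).2 fun y _ => hNlt y
  set W : ℝ := Finset.univ.sup' Finset.univ_nonempty
      (fun y => |phiSeq P p f 1 y - phiSeq P p f 0 y|) with hW
  have hWb : ∀ y : E, |phiSeq P p f 1 y - phiSeq P p f 0 y| ≤ W :=
    fun y => Finset.le_sup' (fun y => |phiSeq P p f 1 y - phiSeq P p f 0 y|) (Finset.mem_univ y)
  have hW0 : 0 ≤ W := le_trans (abs_nonneg _) (hWb x)
  -- summability of increments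
  have habsle : ∀ n : ℕ, |phiSeq P p f (n + 1) x - phiSeq P p f n x| ≤ W * M ^ (n / N) := by
    intro n
    exact (w_le hP hp hWb n x).trans
      (mul_le_mul_of_nonneg_left (sig_le_pow hP hM0 hMb n x) hW0)
  have hsummable : Summable (fun n => phiSeq P p f (n + 1) x - phiSeq P p f n x) := by
    refine Summable.of_abs (summable_of_sum_range_le (fun n => abs_nonneg _) (c := W * ((N : ℝ) * (1 - M)⁻¹)) ?_)
    intro n
    calc (∑ i ∈ Finset.range n, |phiSeq P p f (i + 1) x - phiSeq P p f i x|)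
        ≤ ∑ i ∈ Finset.range n, W * M ^ (i / N) :=
          Finset.sum_le_sum fun i _ => habsle i
      _ = W * ∑ i ∈ Finset.range n, M ^ (i / N) := by rw [Finset.mul_sum]
      _ ≤ W * ((N : ℝ) * (1 - M)⁻¹) :=
          mul_le_mul_of_nonneg_left (sum_pow_div_le hM0 hM1 hNpos n) hW0
  have htel : ∀ n : ℕ, phiSeq P p f n x
      = phiSeq P p f 0 x + ∑ i ∈ Finset.range n, (phiSeq P p f (i + 1) x - phiSeq P p f i x) := by
    intro n
    induction n with
    | zero => simp
    | succ n ih => rw [Finset.sum_range_succ, ← add_assoc, ← ih]; ring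
  have hlim : Tendsto (fun n => phiSeq P p f n x) atTop
      (nhds (phiSeq P p f 0 x + ∑' i, (phiSeq P p f (i + 1) x - phiSeq P p f i x))) := by
    have h1 := hsummable.hasSum.tendsto_sum_nat
    have h2 := (tendsto_const_nhds (x := phiSeq P p f 0 x) (f := (atTop : Filter ℕ))).add h1
    refine h2.congr fun n => (htel n).symm
  have heq : phi P p f x
      = phiSeq P p f 0 x + ∑' i, (phiSeq P p f (i + 1) x - phiSeq P p f i x) :=
    hlim.limUnder_eq
  rw [heq]; exact hlim

lemma phi_fixed (hP : IsTransition P) (habs : IsAbsorbingChain P)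
    {p : E → ℝ} (hp : IsStrategy p) (f : E → ℝ) (x : E) :
    phi P p f x = p x * f x + (1 - p x) * step P (phi P p f) x := by
  have h1 := tendsto_phiSeq hP habs hp f x
  have h2 : Tendsto (fun n => phiSeq P p f (n + 1) x) atTop (nhds (phi P p f x)) :=
    h1.comp (tendsto_add_atTop_nat 1)
  have h3 : Tendsto (fun n => p x * f x + (1 - p x) * step P (phiSeq P p f n) x) atTop
      (nhds (p x * f x + (1 - p x) * step P (phi P p f) x)) := by
    refine tendsto_const_nhds.add (Tendsto.const_mul _ ?_)
    unfold step
    exact tendsto_finset_sum _ fun y _ => (tendsto_phiSeq hP habs hp f y).const_mul _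
  exact tendsto_nhds_unique h2 h3

end phiseq

/-- Proposition 2.8: the equilibrium condition (EqI) is equivalent to each of
(EqII), (EqIII) and (EqIV). -/
theorem equivalent_equilibrium_conditions [Fintype E] [DecidableEq E]
    (P : E → E → ℝ) (hP : IsTransition P) (habs : IsAbsorbingChain P)
    (f h : E → ℝ) (g : ℝ → ℝ) (hg : Continuous g)
    (phat : E → ℝ) (hphat : IsStrategy phat) :
    List.TFAE
      [ -- (EqI)
        ∀ x : E, ∀ q ∈ Set.Icc (0 : ℝ) 1,
          q * f x + (1 - q) * step P (phi P phat f) x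
              + g (q * h x + (1 - q) * step P (phi P phat h) x)
            ≤ Jval P f h g phat x,
        -- (EqII)
        ∀ x : E, ∀ q ∈ Set.Icc (0 : ℝ) 1,
          Kval P f h g phat x q ≤ phi P phat f x + g (phi P phat h x),
        -- (EqIII)
        ∀ x : E, IsGreatest ((fun q => Kval P f h g phat x q) '' Set.Icc (0 : ℝ) 1)
          (phi P phat f x + g (phi P phat h x)),
        -- (EqIV)
        ∀ x : E, IsMaxOn (fun q => Kval P f h g phat x q) (Set.Icc (0 : ℝ) 1) (phat x) ] := by
  have key : ∀ x : E, Kval P f h g phat x (phat x) = phi P phat f x + g (phi P phat h x) := by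
    intro x
    unfold Kval
    rw [← phi_fixed hP habs hphat f x, ← phi_fixed hP habs hphat h x]
  tfae_have 1 ↔ 2 := by unfold Kval Jval; exact Iff.rfl
  tfae_have 2 → 4 := by
    intro H x q hq
    simp only [Set.mem_setOf_eq, key x]
    exact H x q hq
  tfae_have 4 → 3 := by
    intro H x
    refine ⟨⟨phat x, hphat x, key x⟩, ?_⟩
    rintro r ⟨q, hq, rfl⟩
    calc Kval P f h g phat x q ≤ Kval P f h g phat x (phat x) := H x hq
      _ = phi P phat f x + g (phi P phat h x) := key x
  tfae_have 3 → 2 := fun H x q hq => (H x).2 ⟨q, hq, rfl⟩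
  tfae_finish
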